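/- arXiv:1811.00749 — 3 statements merged into one kernel-verified Lean document; each statement's English description precedes it below -/
import Mathlib

section
/- For every real cost parameter α and every real potential ψ₀, the soft-margin RFGB objective for a positive example, L⁺(ψ) = ψ − log(exp ψ + exp α), has derivative at ψ₀ equal to 1 − p/(p + (1 − p)·exp α), where p = exp ψ₀/(exp ψ₀ + 1) is the predicted probability of the example being positive. -/
/-- For every real cost parameter `α` and every real potential `ψ₀`, the soft-margin RFGB
objective for a positive example, `L⁺(ψ) = ψ − log(exp ψ + exp α)`, has derivative at `ψ₀`
equal to `1 − p/(p + (1 − p)·exp α)`, where `p = exp ψ₀/(exp ψ₀ + 1)`. -/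
theorem softmargin_pos_gradient (α ψ₀ : ℝ) :
    HasDerivAt (fun ψ : ℝ => ψ - Real.log (Real.exp ψ + Real.exp α))
      (1 - (Real.exp ψ₀ / (Real.exp ψ₀ + 1)) /
        ((Real.exp ψ₀ / (Real.exp ψ₀ + 1)) +
          (1 - Real.exp ψ₀ / (Real.exp ψ₀ + 1)) * Real.exp α)) ψ₀ := by
  have h1 : Real.exp ψ₀ + 1 > 0 := by positivity
  have h2 : Real.exp ψ₀ + Real.exp α > 0 := by positivity
  have key : (Real.exp ψ₀ / (Real.exp ψ₀ + 1)) /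
        ((Real.exp ψ₀ / (Real.exp ψ₀ + 1)) +
          (1 - Real.exp ψ₀ / (Real.exp ψ₀ + 1)) * Real.exp α)
      = Real.exp ψ₀ / (Real.exp ψ₀ + Real.exp α) := by
    rw [div_eq_div_iff]
    · ring_nf
      field_simp
      ring
    · have : (Real.exp ψ₀ / (Real.exp ψ₀ + 1)) +
          (1 - Real.exp ψ₀ / (Real.exp ψ₀ + 1)) * Real.exp α
          = (Real.exp ψ₀ + Real.exp α) / (Real.exp ψ₀ + 1) := by
        field_simp
        ring
      rw [this]; positivity
    · exact h2.ne'
  rw [key]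
  have hd : HasDerivAt (fun ψ : ℝ => Real.log (Real.exp ψ + Real.exp α))
      (Real.exp ψ₀ / (Real.exp ψ₀ + Real.exp α)) ψ₀ := by
    have := ((Real.hasDerivAt_exp ψ₀).add_const (Real.exp α)).log h2.ne'
    simpa using this
  exact (hasDerivAt_id' ψ₀).sub hd
end

section
/- For every real cost parameter β and every real potential ψ₀, the soft-margin RFGB objective for a negative example, L⁻(ψ) = −log(exp(ψ + β) + 1), has derivative at ψ₀ equal to −p·exp β/(p·exp β + (1 − p)), where p = exp ψ₀/(exp ψ₀ + 1) is the predicted probability of the example being positive. -/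
/-- For every real cost parameter `β` and every real potential `ψ₀`, the soft-margin RFGB
objective for a negative example, `L⁻(ψ) = −log(exp(ψ + β) + 1)`, has derivative at `ψ₀`
equal to `−p·exp β/(p·exp β + (1 − p))`, where `p = exp ψ₀/(exp ψ₀ + 1)`. -/
theorem softmargin_neg_gradient (β ψ₀ : ℝ) :
    HasDerivAt (fun ψ : ℝ => -Real.log (Real.exp (ψ + β) + 1))
      (-((Real.exp ψ₀ / (Real.exp ψ₀ + 1)) * Real.exp β) /
        ((Real.exp ψ₀ / (Real.exp ψ₀ + 1)) * Real.exp β +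
          (1 - Real.exp ψ₀ / (Real.exp ψ₀ + 1)))) ψ₀ := by
  have h1 : HasDerivAt (fun ψ : ℝ => ψ + β) 1 ψ₀ := (hasDerivAt_id ψ₀).add_const β
  have h2 := h1.exp
  have h3 : HasDerivAt (fun ψ : ℝ => Real.exp (ψ + β) + 1)
      (Real.exp (ψ₀ + β)) ψ₀ := by simpa using h2.add_const 1
  have hpos : Real.exp (ψ₀ + β) + 1 ≠ 0 := by positivity
  have h4 : HasDerivAt (fun ψ : ℝ => -Real.log (Real.exp (ψ + β) + 1))
      (-(Real.exp (ψ₀ + β) / (Real.exp (ψ₀ + β) + 1))) ψ₀ := (h3.log hpos).neg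
  convert h4 using 1
  have he : Real.exp ψ₀ + 1 ≠ 0 := by positivity
  rw [Real.exp_add]
  have hpos' : Real.exp ψ₀ * Real.exp β + 1 ≠ 0 := by positivity
  field_simp
  rw [add_sub_cancel_left, div_self hpos']
end

section
/- For every residence time T > 0, the positive-example log-likelihood of RCTBN learning, L⁺(ψ) = log(1 − exp(−T·exp ψ)), is a concave function of ψ on all of ℝ (its second derivative is nonpositive everywhere); hence the log-likelihood has a global maximum behavior in the functional parameter. -/
open Real

section aux

variable (T : ℝ)

private lemma u_pos (hT : 0 < T) (ψ : ℝ) : 0 < T * Real.exp ψ :=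
  mul_pos hT (Real.exp_pos ψ)

private lemma den_pos (hT : 0 < T) (ψ : ℝ) : 0 < Real.exp (T * Real.exp ψ) - 1 := by
  have := Real.exp_lt_exp.2 (u_pos T hT ψ)
  simpa using this

private lemma g_pos (hT : 0 < T) (ψ : ℝ) : 0 < 1 - Real.exp (-(T * Real.exp ψ)) := by
  have : Real.exp (-(T * Real.exp ψ)) < 1 := by
    rw [Real.exp_lt_one_iff]
    exact neg_neg_iff_pos.2 (u_pos T hT ψ)
  linarith

/-- the first derivative of the log-likelihood -/
private noncomputable def h (ψ : ℝ) : ℝ :=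
  T * Real.exp ψ / (Real.exp (T * Real.exp ψ) - 1)

private lemma hasDerivAt_u (ψ : ℝ) : HasDerivAt (fun x => T * Real.exp x) (T * Real.exp ψ) ψ :=
  (Real.hasDerivAt_exp ψ).const_mul T

private lemma hasDerivAt_f (hT : 0 < T) (ψ : ℝ) :
    HasDerivAt (fun x : ℝ => Real.log (1 - Real.exp (-(T * Real.exp x)))) (h T ψ) ψ := by
  have hu := hasDerivAt_u T ψ
  have hexp : HasDerivAt (fun x : ℝ => Real.exp (-(T * Real.exp x)))
      (Real.exp (-(T * Real.exp ψ)) * -(T * Real.exp ψ)) ψ :=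
    (Real.hasDerivAt_exp _).comp ψ hu.neg
  have hg : HasDerivAt (fun x : ℝ => 1 - Real.exp (-(T * Real.exp x)))
      (T * Real.exp ψ * Real.exp (-(T * Real.exp ψ))) ψ := by
    have := hexp.const_sub (1 : ℝ)
    exact this.congr_deriv (by ring)
  have := hg.log (ne_of_gt (g_pos T hT ψ))
  convert this using 1
  unfold h
  rw [div_eq_div_iff (ne_of_gt (den_pos T hT ψ)) (ne_of_gt (g_pos T hT ψ))]
  have hE : Real.exp (-(T * Real.exp ψ)) * Real.exp (T * Real.exp ψ) = 1 := by
    rw [← Real.exp_add]; simp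
  rw [mul_sub, mul_sub, mul_one]
  have h2 : T * Real.exp ψ * Real.exp (-(T * Real.exp ψ)) * Real.exp (T * Real.exp ψ)
      = T * Real.exp ψ := by
    rw [mul_assoc, hE, mul_one]
  linarith

private lemma deriv_f (hT : 0 < T) :
    deriv (fun x : ℝ => Real.log (1 - Real.exp (-(T * Real.exp x)))) = h T := by
  funext ψ
  exact (hasDerivAt_f T hT ψ).deriv

private lemma hasDerivAt_h (hT : 0 < T) (ψ : ℝ) :
    HasDerivAt (h T)
      ((T * Real.exp ψ * (Real.exp (T * Real.exp ψ) - 1)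
        - T * Real.exp ψ * (Real.exp (T * Real.exp ψ) * (T * Real.exp ψ)))
        / (Real.exp (T * Real.exp ψ) - 1) ^ 2) ψ := by
  have hu := hasDerivAt_u T ψ
  have hden : HasDerivAt (fun x : ℝ => Real.exp (T * Real.exp x) - 1)
      (Real.exp (T * Real.exp ψ) * (T * Real.exp ψ)) ψ :=
    ((Real.hasDerivAt_exp _).comp ψ hu).sub_const 1
  exact hu.div hden (ne_of_gt (den_pos T hT ψ))

end aux

/-- For every residence time `T > 0`, the positive-example log-likelihood of RCTBN learning,
`L⁺(ψ) = log(1 − exp(−T·exp ψ))`, is a concave function of `ψ` on all of `ℝ`. -/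
theorem rctbn_pos_concave (T : ℝ) (hT : 0 < T) :
    ConcaveOn ℝ Set.univ
      (fun ψ : ℝ => Real.log (1 - Real.exp (-(T * Real.exp ψ)))) := by
  apply concaveOn_univ_of_deriv2_nonpos
  · exact fun ψ => (hasDerivAt_f T hT ψ).differentiableAt
  · rw [deriv_f T hT]
    exact fun ψ => (hasDerivAt_h T hT ψ).differentiableAt
  · intro ψ
    have : deriv^[2] (fun x : ℝ => Real.log (1 - Real.exp (-(T * Real.exp x)))) ψ
        = deriv (h T) ψ := by
      simp [Function.iterate_succ, deriv_f T hT]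
    rw [this, (hasDerivAt_h T hT ψ).deriv]
    apply div_nonpos_of_nonpos_of_nonneg _ (sq_nonneg _)
    set u := T * Real.exp ψ with hu
    have hupos : 0 < u := u_pos T hT ψ
    have hE : Real.exp (-u) * Real.exp u = 1 := by rw [← Real.exp_add]; simp
    have key : Real.exp u - 1 ≤ u * Real.exp u := by
      have := mul_le_mul_of_nonneg_right (Real.add_one_le_exp (-u)) (le_of_lt (Real.exp_pos u))
      nlinarith [this, hE]
    nlinarith [Real.exp_pos u]
end
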